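/- Let (Ω, μ) be a finite measure space with normalized expectation E, U ≥ 0 measurable with E[U] = 1 and E[|U² log U|] < ∞. Let S_NS = E[−U log U] and v = var(U) = E[U²] − 1. Then the chain of inequalities holds: cov(−U log U, U) ≤ −v·log(1+v) ≤ v·S_NS ≤ (e^{−S_NS} − 1)·S_NS ≤ −(1/p* − 1)·log(1/p*) ≤ 0, where p* = μ(U>0)/μ(Ω); all but the last inequality are saturated when U ∈ {0, 1/p*} a.e. -/

import Mathlib

open MeasureTheory Real Set

/-- Strong Second Law of Natural Selection: with `v = var(U)`, `S = S_NS = E[−U log U]`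
and `p* = μ(U>0)/N`, the chain holds:
`cov(−U log U, U) ≤ −v log(1+v) ≤ v·S ≤ (e^{−S}−1)·S ≤ −(1/p*−1)·log(1/p*) ≤ 0`,
and all but the last inequality are saturated when `U ∈ {0, 1/p*}` a.e. -/
lemma tangent (x a : ℝ) (hx : 0 ≤ x) (ha : 0 < a) :
    -(x * Real.log x) ≤ a - x * (1 + Real.log a) := by
  rcases eq_or_lt_of_le hx with h | h
  · simp [← h]; positivity
  · have hd : 0 < a / x := div_pos ha h
    have := Real.log_le_sub_one_of_pos hd
    rw [Real.log_div (ne_of_gt ha) (ne_of_gt h)] at this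
    have hax : a / x * x = a := div_mul_cancel₀ a (ne_of_gt h)
    nlinarith [this, h]

lemma tangent2 (x a : ℝ) (hx : 0 ≤ x) (ha : 0 < a) :
    x * Real.log x ≤ x^2 / a - x + x * Real.log a := by
  rcases eq_or_lt_of_le hx with h | h
  · simp [← h]
  · have hd : 0 < x / a := div_pos h ha
    have := Real.log_le_sub_one_of_pos hd
    rw [Real.log_div (ne_of_gt h) (ne_of_gt ha)] at this
    have h2 : x * (Real.log x - Real.log a) ≤ x * (x / a - 1) :=
      mul_le_mul_of_nonneg_left this hx
    have hxx : x * (x/a) = x^2/a := by ring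
    nlinarith [h2]

lemma tangent3 (x a : ℝ) (hx : 0 ≤ x) (ha : 0 < a) :
    -((x:ℝ)^2 * Real.log x) ≤ a * x - x^2 * (1 + Real.log a) := by
  have := mul_le_mul_of_nonneg_left (tangent x a hx ha) hx
  nlinarith [this]

theorem strong_second_law
    {Ω : Type*} [MeasurableSpace Ω] (μ : Measure Ω) [IsFiniteMeasure μ]
    (hN : 0 < (μ univ).toReal)
    (U : Ω → ℝ) (hUm : Measurable U) (hU0 : ∀ x, 0 ≤ U x)
    (hU1 : (∫ x, U x ∂μ) / (μ univ).toReal = 1)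
    (hU2 : Integrable (fun x => (U x) ^ 2) μ)
    (hent1 : Integrable (fun x => U x * Real.log (U x)) μ)
    (hent2 : Integrable (fun x => (U x) ^ 2 * Real.log (U x)) μ) :
    let N := (μ univ).toReal
    let pstar := (μ {x | 0 < U x}).toReal / N
    let v := (∫ x, (U x) ^ 2 ∂μ) / N - 1
    let S := (∫ x, -(U x * Real.log (U x)) ∂μ) / N
    let c := (∫ x, -(U x * Real.log (U x)) * (U x - 1) ∂μ) / N
    c ≤ -v * Real.log (1 + v) ∧
      -v * Real.log (1 + v) ≤ v * S ∧
      v * S ≤ (Real.exp (-S) - 1) * S ∧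
      (Real.exp (-S) - 1) * S ≤ -(1 / pstar - 1) * Real.log (1 / pstar) ∧
      -(1 / pstar - 1) * Real.log (1 / pstar) ≤ 0 ∧
      ((∀ᵐ x ∂μ, U x = 0 ∨ U x = 1 / pstar) →
        (c = -v * Real.log (1 + v) ∧
          -v * Real.log (1 + v) = v * S ∧
          v * S = (Real.exp (-S) - 1) * S ∧
          (Real.exp (-S) - 1) * S = -(1 / pstar - 1) * Real.log (1 / pstar))) := by
  intro N pstar v S c
  have hNne : N ≠ 0 := ne_of_gt hN
  -- integrability of U
  have hUint : Integrable U μ := by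
    have : Integrable (fun x => ((U x)^2 + 1) / 2) μ := ((hU2.add (integrable_const 1)).div_const 2)
    refine this.mono' (hUm.aestronglyMeasurable) ?_
    filter_upwards with x
    rw [Real.norm_eq_abs, abs_of_nonneg (hU0 x)]
    nlinarith [sq_nonneg (U x - 1), hU0 x]
  have hIU : ∫ x, U x ∂μ = N := by
    rw [div_eq_one_iff_eq hNne] at hU1; exact hU1
  have hI2 : ∫ x, (U x)^2 ∂μ = N * (1 + v) := by
    show _ = N * (1 + ((∫ x, (U x) ^ 2 ∂μ) / N - 1))
    field_simp
    ring
  -- v ≥ 0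
  have hv0 : 0 ≤ v := by
    have i1 : Integrable (fun x => 2 * U x - 1) μ := (hUint.const_mul 2).sub (integrable_const 1)
    have hle : ∫ x, (2 * U x - 1) ∂μ ≤ ∫ x, (U x)^2 ∂μ := by
      refine integral_mono i1 hU2 ?_
      intro x; dsimp; nlinarith [sq_nonneg (U x - 1)]
    have i2 : Integrable (fun x => 2 * U x) μ := hUint.const_mul 2
    rw [integral_sub i2 (integrable_const 1), integral_const_mul,
      hIU, integral_const, hI2] at hle
    simp only [smul_eq_mul, measure_univ, mul_one] at hle
    have : μ.real univ = N := rfl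
    rw [this] at hle
    nlinarith [hN, hle]
  have h1v : (0:ℝ) < 1 + v := by linarith
  -- Gibbs lower bound: -S ≤ log(1+v)
  have hGl : -S ≤ Real.log (1 + v) := by
    have i1 : Integrable (fun x => (U x)^2 / (1+v) - U x) μ := (hU2.div_const _).sub hUint
    have i2 : Integrable (fun x => U x * Real.log (1+v)) μ := hUint.mul_const _
    have i3 : Integrable (fun x => (U x)^2 / (1+v)) μ := hU2.div_const _
    have hle : ∫ x, U x * Real.log (U x) ∂μ ≤
        ∫ x, ((U x)^2 / (1+v) - U x + U x * Real.log (1+v)) ∂μ := by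
      refine integral_mono hent1 (i1.add i2) ?_
      intro x; exact tangent2 (U x) (1+v) (hU0 x) h1v
    rw [integral_add i1 i2, integral_sub i3 hUint, integral_div, hI2, hIU,
      integral_mul_const, hIU] at hle
    have hS : -S = (∫ x, U x * Real.log (U x) ∂μ) / N := by
      show -((∫ x, -(U x * Real.log (U x)) ∂μ) / N) = _
      rw [integral_neg]; ring
    rw [hS]
    rw [div_le_iff₀ hN]
    have : N * (1+v) / (1+v) = N := by field_simp
    calc (∫ x, U x * Real.log (U x) ∂μ) ≤ N * (1+v)/(1+v) - N + N * Real.log (1+v) := hle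
      _ = Real.log (1+v) * N := by rw [this]; ring
  -- S ≤ 0
  have hS0 : S ≤ 0 := by
    have hle : ∫ x, -(U x * Real.log (U x)) ∂μ ≤ ∫ x, (1 - U x) ∂μ := by
      refine integral_mono hent1.neg ((integrable_const 1).sub hUint) ?_
      intro x
      have := tangent (U x) 1 (hU0 x) one_pos
      simpa using this
    rw [integral_sub (integrable_const 1) hUint, integral_const, hIU] at hle
    simp only [smul_eq_mul, mul_one] at hle
    have hle2 : ∫ x, -(U x * Real.log (U x)) ∂μ ≤ 0 := by
      have : μ.real univ = N := rfl
      rw [this] at hle; linarith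
    exact div_nonpos_of_nonpos_of_nonneg hle2 (le_of_lt hN)
  -- Jensen for c : first inequality
  have hc1 : c ≤ -v * Real.log (1 + v) := by
    have i1 : Integrable (fun x => (1+v) * U x) μ := hUint.const_mul _
    have i2 : Integrable (fun x => (U x)^2 * (1 + Real.log (1+v))) μ := hU2.mul_const _
    have hle : ∫ x, -((U x)^2 * Real.log (U x)) ∂μ ≤
        ∫ x, ((1+v) * U x - (U x)^2 * (1 + Real.log (1+v))) ∂μ := by
      refine integral_mono hent2.neg (i1.sub i2) ?_
      intro x; exact tangent3 (U x) (1+v) (hU0 x) h1v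
    rw [integral_sub i1 i2, integral_const_mul, hIU, integral_mul_const, hI2] at hle
    have hJ : (∫ x, -((U x)^2 * Real.log (U x)) ∂μ) / N ≤ -(1+v) * Real.log (1+v) := by
      rw [div_le_iff₀ hN]
      calc (∫ x, -((U x)^2 * Real.log (U x)) ∂μ)
          ≤ (1+v) * N - N * (1+v) * (1 + Real.log (1+v)) := hle
        _ = -(1+v) * Real.log (1+v) * N := by ring
    have hcdef : c = (∫ x, -((U x)^2 * Real.log (U x)) ∂μ) / N
        + (∫ x, U x * Real.log (U x) ∂μ) / N := by
      show (∫ x, -(U x * Real.log (U x)) * (U x - 1) ∂μ) / N = _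
      rw [← add_div]
      congr 1
      have i3 : Integrable (fun x => -((U x)^2 * Real.log (U x))) μ := hent2.neg
      rw [← integral_add i3 hent1]
      congr 1; funext x; ring
    rw [hcdef]
    have h2 : (∫ x, U x * Real.log (U x) ∂μ) / N ≤ Real.log (1+v) := by
      have hS : -S = (∫ x, U x * Real.log (U x) ∂μ) / N := by
        show -((∫ x, -(U x * Real.log (U x)) ∂μ) / N) = _
        rw [integral_neg]; ring
      rw [← hS]; exact hGl
    calc _ ≤ -(1+v) * Real.log (1+v) + Real.log (1+v) := add_le_add hJ h2
      _ = -v * Real.log (1+v) := by ring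
  -- second inequality
  have hc2 : -v * Real.log (1 + v) ≤ v * S := by nlinarith [hGl, hv0]
  -- third inequality
  have hc3 : v * S ≤ (Real.exp (-S) - 1) * S := by
    have hexp : Real.exp (-S) ≤ 1 + v := by
      calc Real.exp (-S) ≤ Real.exp (Real.log (1+v)) := Real.exp_le_exp.mpr hGl
        _ = 1 + v := Real.exp_log h1v
    nlinarith [hS0, hexp]
  -- positive mass of A
  set A := {x | 0 < U x} with hA_def
  have hA : MeasurableSet A := measurableSet_lt measurable_const hUm
  set M := (μ A).toReal with hM_def
  have hMN : M ≤ N := by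
    apply ENNReal.toReal_mono (measure_ne_top μ _)
    exact measure_mono (subset_univ A)
  have hM0 : 0 < M := by
    by_contra h
    push_neg at h
    have hM00 : M = 0 := le_antisymm h (ENNReal.toReal_nonneg)
    have hμA : μ A = 0 := by
      have := ENNReal.toReal_eq_zero_iff (μ A)
      rw [hM_def] at hM00
      rcases this.mp hM00 with h' | h'
      · exact h'
      · exact absurd h' (measure_ne_top μ A)
    have hU0ae : U =ᵐ[μ] 0 := by
      have : ∀ᵐ x ∂μ, x ∉ A := by
        rw [ae_iff]; simpa using hμA
      filter_upwards [this] with x hx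
      simp only [hA_def, mem_setOf_eq, not_lt] at hx
      exact le_antisymm hx (hU0 x)
    have : ∫ x, U x ∂μ = 0 := by
      rw [integral_congr_ae hU0ae]; simp
    rw [hIU] at this; exact hNne this
  set q := N / M with hq_def
  have hq1 : 1 ≤ q := (le_div_iff₀ hM0).mpr (by linarith)
  have hq0 : 0 < q := lt_of_lt_of_le one_pos hq1
  have hqM : q * M = N := div_mul_cancel₀ N (ne_of_gt hM0)
  have hqp : 1 / pstar = q := by
    show 1 / (M / N) = N / M
    rw [one_div_div]
  -- Gibbs upper bound: S ≤ -log q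
  have hGu : S ≤ -Real.log q := by
    have i1 : Integrable (fun x => A.indicator (fun _ => q) x) μ := (integrable_const q).indicator hA
    have i2 : Integrable (fun x => U x * (1 + Real.log q)) μ := hUint.mul_const _
    have hle : ∫ x, -(U x * Real.log (U x)) ∂μ ≤
        ∫ x, (A.indicator (fun _ => q) x - U x * (1 + Real.log q)) ∂μ := by
      refine integral_mono hent1.neg (i1.sub i2) ?_
      intro x
      dsimp only
      by_cases hx : 0 < U x
      · have hxA : x ∈ A := hx
        rw [indicator_of_mem hxA]
        exact tangent (U x) q hx.le hq0
      · have hx0 : U x = 0 := le_antisymm (not_lt.mp hx) (hU0 x)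
        have hxA : x ∉ A := hx
        rw [indicator_of_notMem hxA, hx0]
        simp
    rw [integral_sub i1 i2, integral_indicator_const _ hA, integral_mul_const, hIU] at hle
    simp only [smul_eq_mul] at hle
    show (∫ x, -(U x * Real.log (U x)) ∂μ) / N ≤ -Real.log q
    rw [div_le_iff₀ hN]
    calc (∫ x, -(U x * Real.log (U x)) ∂μ)
        ≤ M * q - N * (1 + Real.log q) := hle
      _ = q * M - N - N * Real.log q := by ring
      _ = -Real.log q * N := by rw [hqM]; ring
  -- fourth inequality
  have hc4 : (Real.exp (-S) - 1) * S ≤ -(1 / pstar - 1) * Real.log (1 / pstar) := by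
    rw [hqp]
    set t := Real.exp (-S) with ht_def
    have hlt : Real.log t = -S := Real.log_exp _
    have htq : q ≤ t := by
      calc q = Real.exp (Real.log q) := (Real.exp_log hq0).symm
        _ ≤ t := Real.exp_le_exp.mpr (by linarith [hGu])
    have hlq : 0 ≤ Real.log q := Real.log_nonneg hq1
    have hlmono : Real.log q ≤ Real.log t := Real.log_le_log hq0 htq
    have key : (q - 1) * Real.log q ≤ (t - 1) * Real.log t :=
      mul_le_mul (by linarith) hlmono hlq (by linarith)
    have : (t - 1) * S = -((t-1) * Real.log t) := by rw [hlt]; ring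
    rw [this]; linarith
  -- fifth inequality
  have hc5 : -(1 / pstar - 1) * Real.log (1 / pstar) ≤ 0 := by
    rw [hqp]
    have hlq : 0 ≤ Real.log q := Real.log_nonneg hq1
    nlinarith [hlq, hq1]
  refine ⟨hc1, hc2, hc3, hc4, hc5, ?_⟩
  -- equality case
  intro hae
  rw [hqp] at hae
  have hInt : ∀ g : ℝ → ℝ, g 0 = 0 → ∫ x, g (U x) ∂μ = g q * M := by
    intro g hg
    have hcong : (fun x => g (U x)) =ᵐ[μ] A.indicator (fun _ => g q) := by
      filter_upwards [hae] with x hx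
      rcases hx with h0 | hq'
      · have hxA : x ∉ A := by simp [hA_def, h0]
        rw [h0, indicator_of_notMem hxA, hg]
      · have hxA : x ∈ A := by simp [hA_def, hq', hq0]
        rw [hq', indicator_of_mem hxA]
    rw [integral_congr_ae hcong, integral_indicator_const _ hA]
    simp [smul_eq_mul, mul_comm]
    exact Or.inl rfl
  have hI2' : ∫ x, (U x)^2 ∂μ = q^2 * M := hInt (fun u => u^2) (by norm_num)
  have hIS : ∫ x, -(U x * Real.log (U x)) ∂μ = -(q * Real.log q) * M :=
    hInt (fun u => -(u * Real.log u)) (by simp)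
  have hIc : ∫ x, -(U x * Real.log (U x)) * (U x - 1) ∂μ = (-(q * Real.log q) * (q - 1)) * M :=
    hInt (fun u => -(u * Real.log u) * (u - 1)) (by simp)
  have hv : v = q - 1 := by
    show (∫ x, (U x) ^ 2 ∂μ) / N - 1 = q - 1
    rw [hI2']
    have : q^2 * M = q * N := by rw [pow_two, mul_assoc, hqM]
    rw [this, mul_div_assoc, div_self hNne, mul_one]
  have hS : S = -Real.log q := by
    show (∫ x, -(U x * Real.log (U x)) ∂μ) / N = -Real.log q
    rw [hIS]
    have : -(q * Real.log q) * M = -Real.log q * N := by rw [← hqM]; ring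
    rw [this, mul_div_assoc, div_self hNne, mul_one]
  have hc : c = -(q - 1) * Real.log q := by
    show (∫ x, -(U x * Real.log (U x)) * (U x - 1) ∂μ) / N = _
    rw [hIc]
    have : -(q * Real.log q) * (q - 1) * M = (-(q-1) * Real.log q) * N := by rw [← hqM]; ring
    rw [this, mul_div_assoc, div_self hNne, mul_one]
  have h1vq : 1 + v = q := by rw [hv]; ring
  have hexpq : Real.exp (-S) = q := by rw [hS, neg_neg, Real.exp_log hq0]
  refine ⟨?_, ?_, ?_, ?_⟩
  · rw [hc, h1vq, hv]
  · rw [h1vq, hv, hS]; ring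
  · rw [hexpq, hv]
  · rw [hexpq, hS, hqp]; ring
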